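/- Let x < a, b ≤ 0, let f(s) = (a−x)·s^{−3/2}·φ((a + bs − x)/√s) for s > 0, and define f_{T₂}(t) = ∫_0^∞ f(s)·e^{−b²(s+t)/2}·√s/(π√t(s+t)) ds for t > 0. Then lim_{t→0⁺} √t · f_{T₂}(t) = (1/π)·∫_0^∞ e^{−b²s/2}·s^{−1/2}·f(s) ds, a finite positive constant; in particular f_{T₂}(t) ∼ const/√t as t → 0⁺. -/

import Mathlib

open MeasureTheory

/-- The standard normal density `φ`. -/
noncomputable def stdPhi (z : ℝ) : ℝ := Real.exp (-z ^ 2 / 2) / Real.sqrt (2 * Real.pi)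

/-- The (possibly defective) first-passage-time density of Brownian motion started at `x`
through the line `a + b s`. -/
noncomputable def fpt (a x b s : ℝ) : ℝ :=
  (a - x) * s ^ (-(3:ℝ) / 2) * stdPhi ((a + b * s - x) / Real.sqrt s)


section AuxStmt15
open Real Set Filter MeasureTheory


lemma exp_neg_le_of_pos {u : ℝ} (hu : 0 < u) : Real.exp (-u) ≤ 4 / u ^ 2 := by
  have h1 : u / 2 ≤ Real.exp (u / 2) := by
    have := Real.add_one_le_exp (u / 2); linarith
  have h2 : (u / 2) ^ 2 ≤ Real.exp (u / 2) ^ 2 := by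
    apply pow_le_pow_left₀ (by positivity) h1
  have h3 : Real.exp (u / 2) ^ 2 = Real.exp u := by
    rw [sq, ← Real.exp_add]; ring_nf
  have h4 : u ^ 2 / 4 ≤ Real.exp u := by rw [← h3]; nlinarith
  rw [Real.exp_neg, le_div_iff₀ (by positivity), inv_mul_eq_div, div_le_iff₀ (Real.exp_pos u)]
  nlinarith [Real.exp_pos u]

-- pointwise formula
lemma hfun_eq (a x b : ℝ) {s : ℝ} (hs : 0 < s) :
    Real.exp (-b ^ 2 * s / 2) * s ^ (-(1:ℝ) / 2) * fpt a x b s =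
      (a - x) / Real.sqrt (2 * Real.pi) * s ^ (-(2:ℝ)) *
        Real.exp (-(b ^ 2 * s + b * (a - x) + (a - x) ^ 2 / (2 * s))) := by
  unfold fpt stdPhi
  have hsq : Real.sqrt s ^ 2 = s := Real.sq_sqrt hs.le
  have hz : ((a + b * s - x) / Real.sqrt s) ^ 2 = (a + b * s - x) ^ 2 / s := by
    rw [div_pow, hsq]
  rw [hz]
  have hrp : s ^ (-(1:ℝ)/2) * s ^ (-(3:ℝ)/2) = s ^ (-(2:ℝ)) := by
    rw [← Real.rpow_add hs]; norm_num
  have hexp : Real.exp (-b ^ 2 * s / 2) * Real.exp (-((a + b * s - x) ^ 2 / s) / 2) =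
      Real.exp (-(b ^ 2 * s + b * (a - x) + (a - x) ^ 2 / (2 * s))) := by
    rw [← Real.exp_add]
    congr 1
    field_simp
    ring
  calc Real.exp (-b ^ 2 * s / 2) * s ^ (-(1:ℝ)/2) *
        ((a - x) * s ^ (-(3:ℝ)/2) * (Real.exp (-((a + b * s - x) ^ 2 / s) / 2) / Real.sqrt (2 * Real.pi)))
      = (a - x) / Real.sqrt (2 * Real.pi) * (s ^ (-(1:ℝ)/2) * s ^ (-(3:ℝ)/2)) *
        (Real.exp (-b ^ 2 * s / 2) * Real.exp (-((a + b * s - x) ^ 2 / s) / 2)) := by ring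
    _ = _ := by rw [hrp, hexp]

lemma stdPhi_pos (z : ℝ) : 0 < stdPhi z := by
  unfold stdPhi
  have : 0 < Real.sqrt (2 * Real.pi) := Real.sqrt_pos.mpr (by positivity)
  positivity

lemma fpt_nonneg {a x : ℝ} (b : ℝ) (hx : x ≤ a) {s : ℝ} (hs : 0 ≤ s) :
    0 ≤ fpt a x b s := by
  unfold fpt
  exact mul_nonneg (mul_nonneg (by linarith) (Real.rpow_nonneg hs _)) (stdPhi_pos _).le

lemma fpt_measurable (a x b : ℝ) : Measurable (fun s => fpt a x b s) := by
  unfold fpt stdPhi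
  fun_prop

lemma hfun_measurable (a x b : ℝ) :
    Measurable (fun s : ℝ => Real.exp (-b ^ 2 * s / 2) * s ^ (-(1:ℝ) / 2) * fpt a x b s) := by
  unfold fpt stdPhi
  fun_prop

lemma hfun_bound1 {a x b : ℝ} (hx : x < a) {s : ℝ} (hs : 0 < s) (hs1 : s ≤ 1) :
    Real.exp (-b ^ 2 * s / 2) * s ^ (-(1:ℝ) / 2) * fpt a x b s ≤
      16 * ((a - x) / Real.sqrt (2 * Real.pi) * Real.exp (-(b * (a - x)))) / (a - x) ^ 4 := by
  have hc : 0 < a - x := by linarith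
  rw [hfun_eq a x b hs]
  set c := a - x with hcdef
  have hC : 0 < c / Real.sqrt (2 * Real.pi) := by
    have : 0 < Real.sqrt (2 * Real.pi) := Real.sqrt_pos.mpr (by positivity)
    positivity
  have hexp1 : Real.exp (-(b ^ 2 * s + b * c + c ^ 2 / (2 * s))) ≤
      Real.exp (-(b * c)) * Real.exp (-(c ^ 2 / (2 * s))) := by
    rw [← Real.exp_add]
    apply Real.exp_le_exp.mpr
    have : 0 ≤ b ^ 2 * s := by positivity
    linarith
  have hu : 0 < c ^ 2 / (2 * s) := by positivity
  have hexp2 : Real.exp (-(c ^ 2 / (2 * s))) ≤ 16 * s ^ 2 / c ^ 4 := by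
    have h4 := exp_neg_le_of_pos hu
    have : 4 / (c ^ 2 / (2 * s)) ^ 2 = 16 * s ^ 2 / c ^ 4 := by
      field_simp; ring
    linarith [h4, this ▸ h4]
  have hrs : s ^ (-(2:ℝ)) * s ^ 2 = 1 := by
    have : (s : ℝ) ^ 2 = s ^ (2:ℝ) := by
      rw [← Real.rpow_natCast s 2]; norm_num
    rw [this, ← Real.rpow_add hs]; norm_num
  have hrsnn : 0 ≤ s ^ (-(2:ℝ)) := Real.rpow_nonneg hs.le _
  calc c / Real.sqrt (2 * Real.pi) * s ^ (-(2:ℝ)) * Real.exp (-(b ^ 2 * s + b * c + c ^ 2 / (2 * s)))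
      ≤ c / Real.sqrt (2 * Real.pi) * s ^ (-(2:ℝ)) *
        (Real.exp (-(b * c)) * (16 * s ^ 2 / c ^ 4)) := by
        apply mul_le_mul_of_nonneg_left _ (by positivity)
        calc Real.exp (-(b ^ 2 * s + b * c + c ^ 2 / (2 * s)))
            ≤ Real.exp (-(b * c)) * Real.exp (-(c ^ 2 / (2 * s))) := hexp1
          _ ≤ Real.exp (-(b * c)) * (16 * s ^ 2 / c ^ 4) :=
              mul_le_mul_of_nonneg_left hexp2 (Real.exp_pos _).le
    _ = 16 * (c / Real.sqrt (2 * Real.pi) * Real.exp (-(b * c))) / c ^ 4 * (s ^ (-(2:ℝ)) * s ^ 2) := by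
        ring
    _ = 16 * (c / Real.sqrt (2 * Real.pi) * Real.exp (-(b * c))) / c ^ 4 := by rw [hrs, mul_one]

lemma hfun_bound2 {a x b : ℝ} (hx : x < a) {s : ℝ} (hs : 0 < s) :
    Real.exp (-b ^ 2 * s / 2) * s ^ (-(1:ℝ) / 2) * fpt a x b s ≤
      (a - x) / Real.sqrt (2 * Real.pi) * Real.exp (-(b * (a - x))) * s ^ (-(2:ℝ)) := by
  have hc : 0 < a - x := by linarith
  rw [hfun_eq a x b hs]
  set c := a - x
  have hexp1 : Real.exp (-(b ^ 2 * s + b * c + c ^ 2 / (2 * s))) ≤ Real.exp (-(b * c)) := by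
    apply Real.exp_le_exp.mpr
    have h1 : 0 ≤ b ^ 2 * s := by positivity
    have h2 : 0 ≤ c ^ 2 / (2 * s) := by positivity
    linarith
  have hrsnn : 0 ≤ s ^ (-(2:ℝ)) := Real.rpow_nonneg hs.le _
  have hCnn : 0 ≤ c / Real.sqrt (2 * Real.pi) := by positivity
  calc c / Real.sqrt (2 * Real.pi) * s ^ (-(2:ℝ)) * Real.exp (-(b ^ 2 * s + b * c + c ^ 2 / (2 * s)))
      ≤ c / Real.sqrt (2 * Real.pi) * s ^ (-(2:ℝ)) * Real.exp (-(b * c)) :=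
        mul_le_mul_of_nonneg_left hexp1 (by positivity)
    _ = c / Real.sqrt (2 * Real.pi) * Real.exp (-(b * c)) * s ^ (-(2:ℝ)) := by ring

lemma hfun_nonneg {a x : ℝ} (b : ℝ) (hx : x ≤ a) {s : ℝ} (hs : 0 ≤ s) :
    0 ≤ Real.exp (-b ^ 2 * s / 2) * s ^ (-(1:ℝ) / 2) * fpt a x b s :=
  mul_nonneg (mul_nonneg (Real.exp_pos _).le (Real.rpow_nonneg hs _)) (fpt_nonneg b hx hs)

lemma hfun_integrable {a x b : ℝ} (hx : x < a) (hb : b ≤ 0) :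
    IntegrableOn
      (fun s : ℝ => Real.exp (-b ^ 2 * s / 2) * s ^ (-(1:ℝ) / 2) * fpt a x b s)
      (Set.Ioi 0) := by
  have hmeas := hfun_measurable a x b
  rw [← Set.Ioc_union_Ioi_eq_Ioi (by norm_num : (0:ℝ) ≤ 1)]
  apply IntegrableOn.union
  · -- bounded on Ioc 0 1
    apply Measure.integrableOn_of_bounded (M := 16 * ((a - x) / Real.sqrt (2 * Real.pi) *
      Real.exp (-(b * (a - x)))) / (a - x) ^ 4) (by simp) hmeas.aestronglyMeasurable
    rw [ae_restrict_iff' measurableSet_Ioc]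
    filter_upwards with s hs
    rw [Real.norm_eq_abs, abs_of_nonneg (hfun_nonneg b hx.le hs.1.le)]
    exact hfun_bound1 hx hs.1 hs.2
  · -- dominated by K s^{-2} on Ioi 1
    apply Integrable.mono'
      (((integrableOn_Ioi_rpow_of_lt (by norm_num : (-2:ℝ) < -1) one_pos).const_mul
        ((a - x) / Real.sqrt (2 * Real.pi) * Real.exp (-(b * (a - x))))))
      hmeas.aestronglyMeasurable
    rw [ae_restrict_iff' measurableSet_Ioi]
    filter_upwards with s hs
    have hs0 : (0:ℝ) < s := lt_trans one_pos hs
    rw [Real.norm_eq_abs, abs_of_nonneg (hfun_nonneg b hx.le hs0.le)]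
    exact hfun_bound2 hx hs0

lemma fpt_pos {a x : ℝ} (b : ℝ) (hx : x < a) {s : ℝ} (hs : 0 < s) :
    0 < fpt a x b s := by
  unfold fpt
  exact mul_pos (mul_pos (by linarith) (Real.rpow_pos_of_pos hs _)) (stdPhi_pos _)

lemma hfun_integral_pos {a x b : ℝ} (hx : x < a) (hb : b ≤ 0) :
    0 < ∫ s in Set.Ioi (0:ℝ),
      Real.exp (-b ^ 2 * s / 2) * s ^ (-(1:ℝ) / 2) * fpt a x b s := by
  rw [setIntegral_pos_iff_support_of_nonneg_ae _ (hfun_integrable hx hb)]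
  · have hsub : Set.Ioi (0:ℝ) ⊆ Function.support
        (fun s : ℝ => Real.exp (-b ^ 2 * s / 2) * s ^ (-(1:ℝ) / 2) * fpt a x b s) := by
      intro s hs
      have hs' : (0:ℝ) < s := hs
      have : 0 < Real.exp (-b ^ 2 * s / 2) * s ^ (-(1:ℝ) / 2) * fpt a x b s :=
        mul_pos (mul_pos (Real.exp_pos _) (Real.rpow_pos_of_pos hs' _)) (fpt_pos b hx hs')
      exact ne_of_gt this
    rw [Set.inter_eq_right.mpr hsub]
    simp
  · rw [EventuallyLE, ae_restrict_iff' measurableSet_Ioi]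
    filter_upwards with s hs
    exact hfun_nonneg b hx.le (le_of_lt hs)

lemma half_rpow {s : ℝ} (hs : 0 < s) : Real.sqrt s / s = s ^ (-(1:ℝ)/2) := by
  rw [Real.sqrt_eq_rpow, div_eq_mul_inv, ← Real.rpow_neg_one s, ← Real.rpow_add hs]
  norm_num

lemma limit_eq {a x b : ℝ} {s : ℝ} (hs : 0 < s) :
    fpt a x b s * Real.exp (-b ^ 2 * (s + 0) / 2) * Real.sqrt s / (Real.pi * (s + 0)) =
      1 / Real.pi * (Real.exp (-b ^ 2 * s / 2) * s ^ (-(1:ℝ) / 2) * fpt a x b s) := by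
  rw [add_zero, ← half_rpow hs]
  have hpi := Real.pi_ne_zero
  field_simp


end AuxStmt15

/-- for `x < a` and `b ≤ 0`, the density
`f_{T₂}(t) = ∫_0^∞ f(s) e^{-b²(s+t)/2} √s/(π √t (s+t)) ds` satisfies
`√t · f_{T₂}(t) → (1/π) ∫_0^∞ e^{-b²s/2} s^{-1/2} f(s) ds` as `t → 0⁺`, a finite positive
constant; in particular `f_{T₂}(t) ~ const/√t` as `t → 0⁺`. -/
theorem stmt_15 (a x b : ℝ) (hx : x < a) (hb : b ≤ 0) :
    Filter.Tendsto
      (fun t : ℝ => Real.sqrt t *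
        ∫ s in Set.Ioi (0:ℝ), fpt a x b s * Real.exp (-b ^ 2 * (s + t) / 2) *
          Real.sqrt s / (Real.pi * Real.sqrt t * (s + t)))
      (nhdsWithin 0 (Set.Ioi 0))
      (nhds (1 / Real.pi *
        ∫ s in Set.Ioi (0:ℝ),
          Real.exp (-b ^ 2 * s / 2) * s ^ (-(1:ℝ) / 2) * fpt a x b s)) ∧
    IntegrableOn
      (fun s : ℝ => Real.exp (-b ^ 2 * s / 2) * s ^ (-(1:ℝ) / 2) * fpt a x b s)
      (Set.Ioi 0) ∧
    0 < 1 / Real.pi *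
      ∫ s in Set.Ioi (0:ℝ),
        Real.exp (-b ^ 2 * s / 2) * s ^ (-(1:ℝ) / 2) * fpt a x b s := by
  refine ⟨?_, hfun_integrable hx hb, mul_pos (by positivity) (hfun_integral_pos hx hb)⟩
  have hDCT : Filter.Tendsto (fun t : ℝ => ∫ s in Set.Ioi (0:ℝ),
      fpt a x b s * Real.exp (-b ^ 2 * (s + t) / 2) * Real.sqrt s / (Real.pi * (s + t)))
      (nhdsWithin 0 (Set.Ioi 0))
      (nhds (∫ s in Set.Ioi (0:ℝ),
        1 / Real.pi * (Real.exp (-b ^ 2 * s / 2) * s ^ (-(1:ℝ) / 2) * fpt a x b s))) := by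
    apply tendsto_integral_filter_of_dominated_convergence
      (bound := fun s : ℝ => 1 / Real.pi *
        (Real.exp (-b ^ 2 * s / 2) * s ^ (-(1:ℝ) / 2) * fpt a x b s))
    · filter_upwards with t
      apply Measurable.aestronglyMeasurable
      unfold fpt stdPhi
      fun_prop
    · filter_upwards [self_mem_nhdsWithin] with t ht
      rw [ae_restrict_iff' measurableSet_Ioi]
      filter_upwards with s hs
      have hs' : (0:ℝ) < s := hs
      have ht' : (0:ℝ) < t := ht
      have hfpt := fpt_nonneg b hx.le hs'.le
      have hnn : 0 ≤ fpt a x b s * Real.exp (-b ^ 2 * (s + t) / 2) * Real.sqrt s /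
          (Real.pi * (s + t)) := by positivity
      rw [Real.norm_eq_abs, abs_of_nonneg hnn]
      have key : fpt a x b s * Real.exp (-b ^ 2 * (s + t) / 2) * Real.sqrt s /
            (Real.pi * (s + t)) ≤
          fpt a x b s * Real.exp (-b ^ 2 * (s + 0) / 2) * Real.sqrt s / (Real.pi * (s + 0)) := by
        apply div_le_div₀ (by rw [add_zero]; positivity) _ (by rw [add_zero]; positivity) _
        · apply mul_le_mul_of_nonneg_right _ (Real.sqrt_nonneg s)
          apply mul_le_mul_of_nonneg_left _ hfpt
          apply Real.exp_le_exp.mpr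
          nlinarith [sq_nonneg b, ht'.le]
        · have h1 : s + 0 ≤ s + t := by linarith
          exact mul_le_mul_of_nonneg_left h1 Real.pi_pos.le
      calc fpt a x b s * Real.exp (-b ^ 2 * (s + t) / 2) * Real.sqrt s / (Real.pi * (s + t))
          ≤ _ := key
        _ = _ := limit_eq hs'
    · exact (hfun_integrable hx hb).const_mul _
    · rw [ae_restrict_iff' measurableSet_Ioi]
      filter_upwards with s hs
      have hs' : (0:ℝ) < s := hs
      have hcont : ContinuousAt (fun t : ℝ =>
          fpt a x b s * Real.exp (-b ^ 2 * (s + t) / 2) * Real.sqrt s /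
            (Real.pi * (s + t))) 0 := by
        apply ContinuousAt.div (by fun_prop) (by fun_prop)
        rw [add_zero]
        positivity
      have h2 := hcont.tendsto.mono_left (nhdsWithin_le_nhds (s := Set.Ioi (0:ℝ)))
      have h3 : fpt a x b s * Real.exp (-b ^ 2 * (s + 0) / 2) * Real.sqrt s /
          (Real.pi * (s + 0)) =
          1 / Real.pi * (Real.exp (-b ^ 2 * s / 2) * s ^ (-(1:ℝ) / 2) * fpt a x b s) :=
        limit_eq hs'
      rw [h3] at h2
      exact h2
  rw [integral_const_mul] at hDCT
  apply hDCT.congr'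
  filter_upwards [self_mem_nhdsWithin] with t ht
  have ht' : (0:ℝ) < t := ht
  have hst : Real.sqrt t ≠ 0 := by positivity
  rw [← integral_const_mul]
  apply setIntegral_congr_fun measurableSet_Ioi
  intro s hs
  have hs' : (0:ℝ) < s := hs
  have hst0 : s + t ≠ 0 := by positivity
  have hpi := Real.pi_ne_zero
  field_simp
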